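/- Let γ : I → M ⊆ ℝ^ν be a regular C² curve on a C² submanifold, fix t ∈ I, and let γ̂_t : I → H_t be the trace curve of γ in the affine tangent space H_t = γ(t) + T_{γ(t)}M determined by the rolling tangent space. Then P(s,t)(γ̂_t'(s)) = γ'(s) and P(s,t)(γ̂_t''(s)) = π(γ''(s)), where P(s,t) : T_{γ(t)}M → T_{γ(s)}M is the parallel transport map and π is the orthogonal projection of ℝ^ν onto T_{γ(s)}M. -/

import Mathlib

open scoped RealInnerProductSpace

open Filter

/-- If a curve has values (locally) in a coset of a submodule of a Euclidean space,
then its derivative lies in the submodule. -/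
lemma deriv_mem_of_eventually {ν : ℕ} (K : Submodule ℝ (EuclideanSpace ℝ (Fin ν)))
    {f : ℝ → EuclideanSpace ℝ (Fin ν)} {x : ℝ} {f' : EuclideanSpace ℝ (Fin ν)}
    (hf : HasDerivAt f f' x) (h : ∀ᶠ σ in nhds x, f σ - f x ∈ K) : f' ∈ K := by
  have hcl : IsClosed (K : Set (EuclideanSpace ℝ (Fin ν))) := K.closed_of_finiteDimensional
  have ht := hasDerivAt_iff_tendsto_slope.mp hf
  refine hcl.mem_of_tendsto ht ?_
  have h' := h.filter_mono (nhdsWithin_le_nhds (s := {x}ᶜ))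
  filter_upwards [h'] with σ hσ
  rw [slope_def_module]
  exact K.smul_mem _ hσ

/-- A `C²` function is differentiable and has differentiable derivative. -/
lemma contDiff_two_diff {E : Type*} [NormedAddCommGroup E] [NormedSpace ℝ E] {f : ℝ → E}
    (h : ContDiff ℝ 2 f) : Differentiable ℝ f ∧ Differentiable ℝ (deriv f) := by
  rw [show (2 : WithTop ℕ∞) = 1 + 1 from rfl, contDiff_succ_iff_deriv] at h
  exact ⟨h.1, h.2.2.differentiable one_ne_zero⟩

/-- For the trace curve `γ̂_t(s) = Φ(t,s)(γ(s))` of the rolling tangent space,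
parallel transport sends its first derivative to `γ'(s)` and its second
derivative to the orthogonal projection of `γ''(s)` onto the tangent space. -/
theorem trace_curve_derivatives {ν : ℕ} (I : Set ℝ)
    (hIopen : IsOpen I) (hIconn : I.OrdConnected)
    (γ : ℝ → EuclideanSpace ℝ (Fin ν)) (hγ : ContDiff ℝ 2 γ)
    (hreg : ∀ s ∈ I, deriv γ s ≠ 0)
    (T : ℝ → Submodule ℝ (EuclideanSpace ℝ (Fin ν)))
    (htan : ∀ s ∈ I, deriv γ s ∈ T s)
    (Φ : ℝ → ℝ → EuclideanSpace ℝ (Fin ν) → EuclideanSpace ℝ (Fin ν))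
    (P : ℝ → ℝ → EuclideanSpace ℝ (Fin ν) →ₗ[ℝ] EuclideanSpace ℝ (Fin ν))
    (hinit : ∀ s x, Φ s s x = x)
    (hgroup : ∀ s t u x, Φ u t (Φ t s x) = Φ u s x)
    (hmem : ∀ s ∈ I, ∀ t ∈ I, ∀ x, x - γ s ∈ T s → Φ t s x - γ t ∈ T t)
    (haff : ∀ s t x v, Φ t s (x + v) = Φ t s x + P t s v)
    (hΦdiff : ∀ s ∈ I, ∀ x, Differentiable ℝ (fun r => Φ r s x))
    (hroll : ∀ s ∈ I, ∀ x, x - γ s ∈ T s →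
      ∀ u ∈ I, ∀ w ∈ T u, ⟪deriv (fun r => Φ r s x) u, w⟫ = 0)
    (t : ℝ) (ht : t ∈ I)
    (hγh : ContDiff ℝ 2 (fun s => Φ t s (γ s))) :
    ∀ s ∈ I,
      P s t (deriv (fun σ => Φ t σ (γ σ)) s) = deriv γ s ∧
      P s t (deriv (deriv (fun σ => Φ t σ (γ σ))) s) =
        (Submodule.orthogonalProjection (T s) (deriv (deriv γ) s) :
          EuclideanSpace ℝ (Fin ν)) := by
  intro s hs
  set γh : ℝ → EuclideanSpace ℝ (Fin ν) := fun σ => Φ t σ (γ σ) with hγhdef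
  obtain ⟨hγd1, hγd2⟩ := contDiff_two_diff hγ
  obtain ⟨hγhd1, hγhd2⟩ := contDiff_two_diff hγh
  set L : EuclideanSpace ℝ (Fin ν) →L[ℝ] EuclideanSpace ℝ (Fin ν) := (P s t).toContinuousLinearMap with hLdef
  have hLapp : ∀ v, L v = P s t v := fun v => rfl
  set g : ℝ → EuclideanSpace ℝ (Fin ν) := fun σ => Φ s σ (γ σ) with hgdef
  -- the key identity expressing g through the trace curve
  have hgid : ∀ σ, g σ = γ s + L (γh σ - γh s) := by
    intro σ
    have h1 : Φ s t (γh σ) = g σ := hgroup σ t s (γ σ)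
    have h2 : Φ s t (γh s) = γ s := by
      have h := hgroup s t s (γ s)
      rwa [hinit s (γ s)] at h
    calc g σ = Φ s t (γh σ) := h1.symm
      _ = Φ s t (γh s + (γh σ - γh s)) := by rw [add_sub_cancel]
      _ = Φ s t (γh s) + P s t (γh σ - γh s) := haff t s _ _
      _ = γ s + L (γh σ - γh s) := by rw [h2, hLapp]
  -- derivative of g
  have hdg : ∀ σ, HasDerivAt g (L (deriv γh σ)) σ := by
    intro σ
    have h1 : HasDerivAt γh (deriv γh σ) σ := (hγhd1 σ).hasDerivAt
    have h2 : HasDerivAt (fun σ => γh σ - γh s) (deriv γh σ) σ := h1.sub_const _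
    have h3 := (L.hasFDerivAt.comp_hasDerivAt σ h2).const_add (γ s)
    exact h3.congr_of_eventuallyEq (Eventually.of_forall fun σ => hgid σ)
  have hderiv_g : deriv g = fun σ => L (deriv γh σ) := funext fun σ => (hdg σ).deriv
  have hdg2 : HasDerivAt (fun σ => L (deriv γh σ)) (L (deriv (deriv γh) s)) s :=
    L.hasFDerivAt.comp_hasDerivAt s (hγhd2 s).hasDerivAt
  -- memberships
  have hgmem : ∀ σ ∈ I, g σ - γ s ∈ T s := by
    intro σ hσ
    exact hmem σ hσ s hs (γ σ) (by simp)
  have hdgmem : ∀ σ ∈ I, L (deriv γh σ) ∈ T s := by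
    intro σ hσ
    refine deriv_mem_of_eventually (T s) (hdg σ) ?_
    filter_upwards [hIopen.mem_nhds hσ] with σ' hσ'
    simpa using sub_mem (hgmem σ' hσ') (hgmem σ hσ)
  have hddgmem : L (deriv (deriv γh) s) ∈ T s := by
    refine deriv_mem_of_eventually (T s) hdg2 ?_
    filter_upwards [hIopen.mem_nhds hs] with σ' hσ'
    exact sub_mem (hdgmem σ' hσ') (hdgmem s hs)
  -- the parallel vector fields
  set W : EuclideanSpace ℝ (Fin ν) → ℝ → EuclideanSpace ℝ (Fin ν) := fun w σ => Φ σ s (γ s + w) - Φ σ s (γ s) with hWdef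
  have hWdiff : ∀ w, Differentiable ℝ (W w) := fun w =>
    (hΦdiff s hs _).sub (hΦdiff s hs _)
  have hWs : ∀ w, W w s = w := by
    intro w
    simp [hWdef, hinit]
  have hWmem : ∀ w ∈ T s, ∀ σ ∈ I, W w σ ∈ T σ := by
    intro w hw σ hσ
    have h1 := hmem s hs σ hσ (γ s + w) (by simpa using hw)
    have h2 := hmem s hs σ hσ (γ s) (by simp)
    simpa [hWdef, sub_sub_sub_cancel_right] using sub_mem h1 h2
  have hWP : ∀ w σ, W w σ = P σ s w := by
    intro w σ
    rw [hWdef]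
    simp only [haff s σ (γ s) w, add_sub_cancel_left]
  have hWderiv_orth : ∀ w ∈ T s, ∀ σ ∈ I, ∀ z ∈ T σ, ⟪deriv (W w) σ, z⟫ = 0 := by
    intro w hw σ hσ z hz
    have d1 : HasDerivAt (fun r => Φ r s (γ s + w))
        (deriv (fun r => Φ r s (γ s + w)) σ) σ := (hΦdiff s hs _ σ).hasDerivAt
    have d2 : HasDerivAt (fun r => Φ r s (γ s))
        (deriv (fun r => Φ r s (γ s)) σ) σ := (hΦdiff s hs _ σ).hasDerivAt
    have hd : HasDerivAt (W w)
        (deriv (fun r => Φ r s (γ s + w)) σ - deriv (fun r => Φ r s (γ s)) σ) σ := d1.sub d2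
    rw [hd.deriv, inner_sub_left, hroll s hs _ (by simpa using hw) σ hσ z hz,
      hroll s hs (γ s) (by simp) σ hσ z hz, sub_zero]
  -- parallel transport preserves inner products of tangent vectors
  have hWinner : ∀ a ∈ T s, ∀ b ∈ T s, ∀ σ ∈ I, ⟪W a σ, W b σ⟫ = ⟪a, b⟫ := by
    intro a ha b hb σ hσ
    have hconv : Convex ℝ I := convex_iff_ordConnected.mpr hIconn
    have hFd : DifferentiableOn ℝ (fun σ => ⟪W a σ, W b σ⟫) I := fun x _ =>
      (((hWdiff a x).hasDerivAt.inner ℝ (hWdiff b x).hasDerivAt)).differentiableAt.differentiableWithinAt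
    have hF0 : ∀ x ∈ I, fderivWithin ℝ (fun σ => ⟪W a σ, W b σ⟫) I x = 0 := by
      intro x hx
      have hD := ((hWdiff a x).hasDerivAt).inner ℝ ((hWdiff b x).hasDerivAt)
      have hz : ⟪W a x, deriv (W b) x⟫ + ⟪deriv (W a) x, W b x⟫ = 0 := by
        rw [real_inner_comm (deriv (W b) x) (W a x), hWderiv_orth b hb x hx _ (hWmem a ha x hx),
          hWderiv_orth a ha x hx _ (hWmem b hb x hx), add_zero]
      rw [hz] at hD
      rw [fderivWithin_of_isOpen hIopen hx, hD.hasFDerivAt.fderiv]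
      ext z
      simp
    have hconst := hconv.is_const_of_fderivWithin_eq_zero hFd hF0 hσ hs
    rw [hconst, hWs, hWs]
  -- Claim A: the first-derivative identity, at every point of I
  have hA : ∀ w ∈ T s, ∀ σ₀ ∈ I, ⟪deriv γ σ₀, W w σ₀⟫ = ⟪L (deriv γh σ₀), w⟫ := by
    intro w hw σ₀ hσ₀
    have hgσ₀ : g σ₀ - γ s ∈ T s := hgmem σ₀ hσ₀
    have hc : Differentiable ℝ (fun σ => Φ σ s (g σ₀)) := hΦdiff s hs (g σ₀)
    have hΦg : ∀ σ, Φ σ s (g σ) = γ σ := by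
      intro σ
      have h := hgroup σ s σ (γ σ)
      rwa [hinit σ (γ σ)] at h
    -- pointwise identity on I
    have hpt : ∀ σ ∈ I, ⟪γ σ, W w σ⟫ =
        ⟪Φ σ s (g σ₀), W w σ⟫ + (⟪g σ, w⟫ - ⟪g σ₀, w⟫) := by
      intro σ hσ
      have hu : g σ - g σ₀ ∈ T s := by
        simpa using sub_mem (hgmem σ hσ) hgσ₀
      have hγeq : γ σ = Φ σ s (g σ₀) + W (g σ - g σ₀) σ := by
        rw [hWP, ← haff s σ (g σ₀) (g σ - g σ₀), add_sub_cancel, hΦg σ]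
      rw [hγeq, inner_add_left, hWinner _ hu _ hw σ hσ, inner_sub_left]
    have hWd : HasDerivAt (W w) (deriv (W w) σ₀) σ₀ := (hWdiff w σ₀).hasDerivAt
    have hLd : HasDerivAt (fun σ => ⟪γ σ, W w σ⟫)
        (⟪γ σ₀, deriv (W w) σ₀⟫ + ⟪deriv γ σ₀, W w σ₀⟫) σ₀ :=
      (hγd1 σ₀).hasDerivAt.inner ℝ hWd
    have hRd : HasDerivAt
        (fun σ => ⟪Φ σ s (g σ₀), W w σ⟫ + (⟪g σ, w⟫ - ⟪g σ₀, w⟫))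
        ((⟪Φ σ₀ s (g σ₀), deriv (W w) σ₀⟫ +
            ⟪deriv (fun σ => Φ σ s (g σ₀)) σ₀, W w σ₀⟫) +
          (⟪g σ₀, (0 : EuclideanSpace ℝ (Fin ν))⟫ + ⟪L (deriv γh σ₀), w⟫)) σ₀ :=
      ((hc σ₀).hasDerivAt.inner ℝ hWd).add
        (((hdg σ₀).inner ℝ (hasDerivAt_const σ₀ w)).sub_const _)
    have hLd' : HasDerivAt (fun σ => ⟪γ σ, W w σ⟫)
        ((⟪Φ σ₀ s (g σ₀), deriv (W w) σ₀⟫ +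
            ⟪deriv (fun σ => Φ σ s (g σ₀)) σ₀, W w σ₀⟫) +
          (⟪g σ₀, (0 : EuclideanSpace ℝ (Fin ν))⟫ + ⟪L (deriv γh σ₀), w⟫)) σ₀ :=
      hRd.congr_of_eventuallyEq
        (eventuallyEq_of_mem (hIopen.mem_nhds hσ₀) fun σ hσ => hpt σ hσ)
    have heq := hLd.unique hLd'
    have h0 : ⟪deriv (fun σ => Φ σ s (g σ₀)) σ₀, W w σ₀⟫ = 0 :=
      hroll s hs (g σ₀) hgσ₀ σ₀ hσ₀ _ (hWmem w hw σ₀ hσ₀)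
    rw [hΦg σ₀, h0, inner_zero_right, add_zero, zero_add] at heq
    linarith
  -- differentiate Claim A at s
  refine ⟨?_, ?_⟩
  · -- first derivative
    have hkey : ∀ w ∈ T s, ⟪L (deriv γh s) - deriv γ s, w⟫ = 0 := by
      intro w hw
      have h := hA w hw s hs
      rw [hWs] at h
      rw [inner_sub_left, h, sub_self]
    have hv : L (deriv γh s) - deriv γ s ∈ T s := sub_mem (hdgmem s hs) (htan s hs)
    have : L (deriv γh s) - deriv γ s = 0 := by
      have := hkey _ hv
      rwa [real_inner_self_eq_norm_sq, pow_eq_zero_iff (by norm_num), norm_eq_zero] at this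
    have hfin : L (deriv γh s) = deriv γ s := by
      rwa [sub_eq_zero] at this
    exact hfin
  · -- second derivative
    have hB : ∀ w ∈ T s, ⟪deriv (deriv γ) s, w⟫ = ⟪L (deriv (deriv γh) s), w⟫ := by
      intro w hw
      have hWd : HasDerivAt (W w) (deriv (W w) s) s := (hWdiff w s).hasDerivAt
      have hLd : HasDerivAt (fun σ => ⟪deriv γ σ, W w σ⟫)
          (⟪deriv γ s, deriv (W w) s⟫ + ⟪deriv (deriv γ) s, W w s⟫) s :=
        (hγd2 s).hasDerivAt.inner ℝ hWd
      have hRd : HasDerivAt (fun σ => ⟪L (deriv γh σ), w⟫)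
          (⟪L (deriv γh s), (0 : EuclideanSpace ℝ (Fin ν))⟫ + ⟪L (deriv (deriv γh) s), w⟫) s :=
        hdg2.inner ℝ (hasDerivAt_const s w)
      have hLd' : HasDerivAt (fun σ => ⟪deriv γ σ, W w σ⟫)
          (⟪L (deriv γh s), (0 : EuclideanSpace ℝ (Fin ν))⟫ + ⟪L (deriv (deriv γh) s), w⟫) s :=
        hRd.congr_of_eventuallyEq
          (eventuallyEq_of_mem (hIopen.mem_nhds hs) fun σ hσ => hA w hw σ hσ)
      have heq := hLd.unique hLd'
      have h0 : ⟪deriv γ s, deriv (W w) s⟫ = 0 := by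
        rw [real_inner_comm]
        exact hWderiv_orth w hw s hs _ (htan s hs)
      rw [h0, zero_add, hWs, inner_zero_right, zero_add] at heq
      exact heq
    have hproj : (Submodule.orthogonalProjection (T s) (deriv (deriv γ) s) : EuclideanSpace ℝ (Fin ν)) =
        L (deriv (deriv γh) s) := by
      rw [← Submodule.starProjection_apply]
      refine Submodule.eq_starProjection_of_mem_of_inner_eq_zero hddgmem ?_
      intro w hw
      rw [inner_sub_left, hB w hw, sub_self]
    exact hproj.symm
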